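/- For all indices 1 ≤ i, j ≤ ℓ, the difference operators H_i(u) and F_j(v) satisfy the Yangian Cartan–lowering relation: (u − v)·(H_i(u)∘F_j(v) − F_j(v)∘H_i(u)) = (iħ/2)·d_i·a_{ij}·(H_i(u)∘(F_j(u) − F_j(v)) + (F_j(u) − F_j(v))∘H_i(u)), as an identity of ℂ(u,v)-linear endomorphisms of F. -/

import Mathlib

open MvPolynomial Complex Finset

set_option maxHeartbeats 4000000
set_option synthInstance.maxHeartbeats 1000000

noncomputable section

/-- Variables: the spectral variables (indexed by `Fin 2`) and the `γ_{i,k}`. -/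
abbrev Var (ℓ : ℕ) (m : Fin ℓ → ℕ) := Fin 2 ⊕ ((i : Fin ℓ) × Fin (m i))

/-- The field of rational functions over `ℂ` in the spectral variables and the `γ_{i,k}`. -/
abbrev FF (ℓ : ℕ) (m : Fin ℓ → ℕ) := FractionRing (MvPolynomial (Var ℓ m) ℂ)

variable (ℓ : ℕ) (m : Fin ℓ → ℕ)

/-- The embedding of constants `ℂ → F`. -/
def cstHom : ℂ →+* FF ℓ m :=
  (algebraMap (MvPolynomial (Var ℓ m) ℂ) (FF ℓ m)).comp (C : ℂ →+* MvPolynomial (Var ℓ m) ℂ)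

def cst (c : ℂ) : FF ℓ m := cstHom ℓ m c

/-- The variable `γ_{i,k}` as an element of `F`. -/
def gam (i : Fin ℓ) (k : Fin (m i)) : FF ℓ m :=
  algebraMap (MvPolynomial (Var ℓ m) ℂ) (FF ℓ m) (X (Sum.inr ⟨i, k⟩))

/-- The spectral variables. -/
def spec (t : Fin 2) : FF ℓ m :=
  algebraMap (MvPolynomial (Var ℓ m) ℂ) (FF ℓ m) (X (Sum.inl t))

/-- The algebra automorphism of the polynomial ring shifting the variable `w` by `c`
and fixing all other variables. -/
def shiftPoly (c : ℂ) (w : Var ℓ m) :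
    MvPolynomial (Var ℓ m) ℂ ≃ₐ[ℂ] MvPolynomial (Var ℓ m) ℂ :=
  AlgEquiv.ofAlgHom
    (aeval (fun j => if j = w then X j + MvPolynomial.C c else X j))
    (aeval (fun j => if j = w then X j - MvPolynomial.C c else X j))
    (by apply MvPolynomial.algHom_ext; intro j; by_cases h : j = w <;> simp [h])
    (by apply MvPolynomial.algHom_ext; intro j; by_cases h : j = w <;> simp [h])

/-- The induced automorphism of the field of rational functions. -/
def shiftField (c : ℂ) (w : Var ℓ m) : FF ℓ m ≃+* FF ℓ m :=
  IsFractionRing.ringEquivOfRingEquiv (shiftPoly ℓ m c w).toRingEquiv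

variable (a : Fin ℓ → Fin ℓ → ℤ) (d : Fin ℓ → ℕ) (hb : ℂ)

/-- `β_{i,k}` : the automorphism `γ_{i,k} ↦ γ_{i,k} + iħ·d_i`. -/
def beta (i : Fin ℓ) (k : Fin (m i)) : FF ℓ m ≃+* FF ℓ m :=
  shiftField ℓ m (I * hb * (d i : ℂ)) (Sum.inr ⟨i, k⟩)

/-- The constant `(iħ/2)·(d_i·a_{ij} + 2r·d_j)`, where `r` is offset by one
(so that `r` ranges over `0, …, −a_{ji} − 1` in `Finset.range`). -/
def cf (i j : Fin ℓ) (r : ℕ) : ℂ :=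
  (I * hb / 2) * ((d i : ℂ) * (a i j : ℂ) + 2 * ((r : ℂ) + 1) * (d j : ℂ))

variable (l : Fin ℓ → ℕ) (ν : (i : Fin ℓ) → Fin (l i) → ℂ)

/-- `R_i(x) = Π_{t=1}^{l_i} (x − ν_{i,t})`, evaluated at `x ∈ F`. -/
def Rv (i : Fin ℓ) (x : FF ℓ m) : FF ℓ m :=
  ∏ t : Fin (l i), (x - cst ℓ m (ν i t))

/-- The operator `H_i(w)` (acting by multiplication). -/
def Hop (i : Fin ℓ) (w : FF ℓ m) : FF ℓ m → FF ℓ m := fun f =>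
  (Rv ℓ m l ν i w *
    (∏ j ∈ univ.erase i, ∏ r ∈ range (-(a j i)).toNat, ∏ p : Fin (m j),
      (w - gam ℓ m j p - cst ℓ m (cf ℓ a d hb i j r))) /
    (∏ p : Fin (m i),
      ((w - gam ℓ m i p) * (w - gam ℓ m i p - cst ℓ m (I * hb * (d i : ℂ)))))) * f

/-- The operator `F_i(w)`. -/
def Fop (i : Fin ℓ) (w : FF ℓ m) : FF ℓ m → FF ℓ m := fun f =>
  cst ℓ m (-((d i : ℂ) ^ (-(1/2 : ℂ)))) *
    ∑ k : Fin (m i),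
      (Rv ℓ m l ν i (gam ℓ m i k + cst ℓ m (I * hb * (d i : ℂ))) *
        (∏ j ∈ univ.filter (fun j => j < i), ∏ r ∈ range (-(a j i)).toNat, ∏ p : Fin (m j),
          (gam ℓ m i k - gam ℓ m j p - cst ℓ m (cf ℓ a d hb i j r)
            + cst ℓ m (I * hb * (d i : ℂ)))) /
        ((w - gam ℓ m i k - cst ℓ m (I * hb * (d i : ℂ))) *
          ∏ p ∈ univ.erase k, (gam ℓ m i k - gam ℓ m i p))) *
      (beta ℓ m d hb i k) f

section YCLaux
open Finset

variable {ℓ : ℕ} {m : Fin ℓ → ℕ}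

lemma YCL.keyfield {K : Type*} [Field K] (u v g δ κ P T c b h h' : K)
    (hX : u-g-δ ≠ 0) (hY : v-g-δ ≠ 0) (hP : P ≠ 0)
    (key : h * ((u-g-δ) + κ) = h' * ((u-g-δ) - κ)) :
    (u-v) * (h * (c * (T/((v-g-δ)*P) * b)) - c * (T/((v-g-δ)*P) * (h' * b)))
      = κ * (h * (c*(T/((u-g-δ)*P)*b) - c*(T/((v-g-δ)*P)*b))
          + (c*(T/((u-g-δ)*P)*(h'*b)) - c*(T/((v-g-δ)*P)*(h'*b)))) := by
  have e : (u-v) * (h * (c * (T/((v-g-δ)*P) * b)) - c * (T/((v-g-δ)*P) * (h' * b)))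
      - κ * (h * (c*(T/((u-g-δ)*P)*b) - c*(T/((v-g-δ)*P)*b))
          + (c*(T/((u-g-δ)*P)*(h'*b)) - c*(T/((v-g-δ)*P)*(h'*b))))
      = (c*T*b*((u-g-δ)-(v-g-δ))/((u-g-δ)*(v-g-δ)*P)) * (h*((u-g-δ)+κ) - h'*((u-g-δ)-κ)) := by
    field_simp
    ring
  rw [← sub_eq_zero, e, key, sub_self, mul_zero]

lemma YCL.shiftPoly_apply (c : ℂ) (w : Var ℓ m) (p : MvPolynomial (Var ℓ m) ℂ) :
    shiftPoly ℓ m c w p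
      = aeval (fun j => if j = w then X j + MvPolynomial.C c else X j) p := rfl

lemma YCL.beta_algebraMap (d : Fin ℓ → ℕ) (hb : ℂ) (i : Fin ℓ) (k : Fin (m i))
    (p : MvPolynomial (Var ℓ m) ℂ) :
    beta ℓ m d hb i k (algebraMap (MvPolynomial (Var ℓ m) ℂ) (FF ℓ m) p)
      = algebraMap (MvPolynomial (Var ℓ m) ℂ) (FF ℓ m)
          (aeval (fun j => if j = (Sum.inr ⟨i,k⟩ : Var ℓ m)
              then X j + MvPolynomial.C (Complex.I*hb*(d i : ℂ)) else X j) p) := by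
  rw [show beta ℓ m d hb i k = shiftField ℓ m (Complex.I*hb*(d i:ℂ)) (Sum.inr ⟨i,k⟩) from rfl,
    shiftField]
  exact IsFractionRing.ringEquivOfRingEquiv_algebraMap _ p

lemma YCL.beta_cst (d : Fin ℓ → ℕ) (hb : ℂ) (i : Fin ℓ) (k : Fin (m i)) (c : ℂ) :
    beta ℓ m d hb i k (cst ℓ m c) = cst ℓ m c := by
  rw [show cst ℓ m c
      = algebraMap (MvPolynomial (Var ℓ m) ℂ) (FF ℓ m) (MvPolynomial.C c) from rfl,
    YCL.beta_algebraMap]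
  simp

lemma YCL.beta_spec (d : Fin ℓ → ℕ) (hb : ℂ) (i : Fin ℓ) (k : Fin (m i)) (t : Fin 2) :
    beta ℓ m d hb i k (spec ℓ m t) = spec ℓ m t := by
  rw [spec, YCL.beta_algebraMap]
  simp [spec]

lemma YCL.beta_gam_self (d : Fin ℓ → ℕ) (hb : ℂ) (i : Fin ℓ) (k : Fin (m i)) :
    beta ℓ m d hb i k (gam ℓ m i k)
      = gam ℓ m i k + cst ℓ m (Complex.I*hb*(d i : ℂ)) := by
  rw [gam, YCL.beta_algebraMap]
  simp only [MvPolynomial.aeval_X, if_pos rfl]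
  exact map_add (algebraMap (MvPolynomial (Var ℓ m) ℂ) (FF ℓ m)) _ _

lemma YCL.beta_gam_ne (d : Fin ℓ → ℕ) (hb : ℂ) (i : Fin ℓ) (k : Fin (m i))
    {i' : Fin ℓ} {p : Fin (m i')}
    (h : (Sum.inr ⟨i',p⟩ : Var ℓ m) ≠ Sum.inr ⟨i,k⟩) :
    beta ℓ m d hb i k (gam ℓ m i' p) = gam ℓ m i' p := by
  rw [gam, YCL.beta_algebraMap]
  simp [gam, h]

lemma YCL.am_ne (σ : Var ℓ m → ℂ) (p : MvPolynomial (Var ℓ m) ℂ)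
    (h : MvPolynomial.eval σ p ≠ 0) :
    algebraMap (MvPolynomial (Var ℓ m) ℂ) (FF ℓ m) p ≠ 0 := by
  intro h0
  exact h (by rw [(IsFractionRing.to_map_eq_zero_iff (K := FF ℓ m)).mp h0, map_zero])

lemma YCL.sub_sub_ne (q₁ q₂ : Var ℓ m) (hq : q₁ ≠ q₂) (c : ℂ) :
    algebraMap (MvPolynomial (Var ℓ m) ℂ) (FF ℓ m) (X q₁)
      - algebraMap (MvPolynomial (Var ℓ m) ℂ) (FF ℓ m) (X q₂) - cst ℓ m c ≠ 0 := by
  have e : algebraMap (MvPolynomial (Var ℓ m) ℂ) (FF ℓ m) (X q₁)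
      - algebraMap (MvPolynomial (Var ℓ m) ℂ) (FF ℓ m) (X q₂) - cst ℓ m c
      = algebraMap (MvPolynomial (Var ℓ m) ℂ) (FF ℓ m) (X q₁ - X q₂ - MvPolynomial.C c) := by
    simp [cst, cstHom]
  rw [e]
  apply YCL.am_ne (fun t => if t = q₁ then c+1 else 0)
  simp [hq, Ne.symm hq]

lemma YCL.sub_ne (q₁ q₂ : Var ℓ m) (hq : q₁ ≠ q₂) :
    algebraMap (MvPolynomial (Var ℓ m) ℂ) (FF ℓ m) (X q₁)
      - algebraMap (MvPolynomial (Var ℓ m) ℂ) (FF ℓ m) (X q₂) ≠ 0 := by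
  have := YCL.sub_sub_ne q₁ q₂ hq 0
  simpa [cst, cstHom] using this

lemma YCL.spec_gam_cst_ne (t : Fin 2) (j : Fin ℓ) (k : Fin (m j)) (c : ℂ) :
    spec ℓ m t - gam ℓ m j k - cst ℓ m c ≠ 0 :=
  YCL.sub_sub_ne (Sum.inl t) (Sum.inr ⟨j,k⟩) (by simp) c

lemma YCL.spec_gam_ne (t : Fin 2) (j : Fin ℓ) (k : Fin (m j)) :
    spec ℓ m t - gam ℓ m j k ≠ 0 :=
  YCL.sub_ne (Sum.inl t) (Sum.inr ⟨j,k⟩) (by simp)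

lemma YCL.gam_gam_ne (j : Fin ℓ) (k p : Fin (m j)) (hkp : k ≠ p) :
    gam ℓ m j k - gam ℓ m j p ≠ 0 :=
  YCL.sub_ne (Sum.inr ⟨j,k⟩) (Sum.inr ⟨j,p⟩) (by simp [hkp])

lemma YCL.spec_gam_cst_cst_ne (t : Fin 2) (j : Fin ℓ) (k : Fin (m j)) (c c' : ℂ) :
    spec ℓ m t - gam ℓ m j k - cst ℓ m c - cst ℓ m c' ≠ 0 := by
  have e : spec ℓ m t - gam ℓ m j k - cst ℓ m c - cst ℓ m c'
      = spec ℓ m t - gam ℓ m j k - cst ℓ m (c + c') := by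
    rw [show cst ℓ m (c+c') = cst ℓ m c + cst ℓ m c' from map_add (cstHom ℓ m) c c']; ring
  rw [e]; exact YCL.spec_gam_cst_ne t j k (c+c')

lemma YCL.cst_add (c c' : ℂ) : cst ℓ m (c + c') = cst ℓ m c + cst ℓ m c' :=
  map_add (cstHom ℓ m) c c'

lemma YCL.cst_sub (c c' : ℂ) : cst ℓ m (c - c') = cst ℓ m c - cst ℓ m c' :=
  map_sub (cstHom ℓ m) c c'

end YCLaux

lemma YCL.beta_lin_ne {ℓ : ℕ} {m : Fin ℓ → ℕ} (d : Fin ℓ → ℕ) (hb : ℂ)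
    (j : Fin ℓ) (k : Fin (m j)) {i' : Fin ℓ} {p : Fin (m i')}
    (h : (Sum.inr ⟨i',p⟩ : Var ℓ m) ≠ Sum.inr ⟨j,k⟩) (c : ℂ) :
    beta ℓ m d hb j k (spec ℓ m 0 - gam ℓ m i' p - cst ℓ m c)
      = spec ℓ m 0 - gam ℓ m i' p - cst ℓ m c := by
  rw [map_sub, map_sub, YCL.beta_spec, YCL.beta_cst, YCL.beta_gam_ne _ _ _ _ h]

lemma YCL.inr_ne {ℓ : ℕ} {m : Fin ℓ → ℕ} {i' j : Fin ℓ} {p : Fin (m i')} {k : Fin (m j)}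
    (h : i' ≠ j) : (Sum.inr ⟨i',p⟩ : Var ℓ m) ≠ Sum.inr ⟨j,k⟩ := by
  simp [h]

lemma YCL.inr_ne' {ℓ : ℕ} {m : Fin ℓ → ℕ} {j : Fin ℓ} {p k : Fin (m j)}
    (h : p ≠ k) : (Sum.inr ⟨j,p⟩ : Var ℓ m) ≠ Sum.inr ⟨j,k⟩ := by
  simp [h]

lemma YCL.key (ℓ : ℕ) (a : Fin ℓ → Fin ℓ → ℤ) (ha : ∀ i, a i i = 2)
    (ha' : ∀ i j, i ≠ j → a i j ≤ 0)
    (d : Fin ℓ → ℕ)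
    (hsym : ∀ i j, (d i : ℤ) * a i j = (d j : ℤ) * a j i)
    (hb : ℂ) (m : Fin ℓ → ℕ)
    (l : Fin ℓ → ℕ) (ν : (i : Fin ℓ) → Fin (l i) → ℂ)
    (i j : Fin ℓ) (k : Fin (m j)) :
    (Rv ℓ m l ν i (spec ℓ m 0) *
        ∏ j' ∈ Finset.univ.erase i, ∏ r ∈ Finset.range (-(a j' i)).toNat, ∏ p : Fin (m j'),
          (spec ℓ m 0 - gam ℓ m j' p - cst ℓ m (cf ℓ a d hb i j' r))) /
      (∏ p : Fin (m i),
        ((spec ℓ m 0 - gam ℓ m i p) *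
          (spec ℓ m 0 - gam ℓ m i p - cst ℓ m (Complex.I * hb * (d i : ℂ))))) *
      (spec ℓ m 0 - gam ℓ m j k - cst ℓ m (Complex.I * hb * (d j : ℂ))
        + cst ℓ m (Complex.I * hb / 2 * ((d i : ℂ) * (a i j : ℂ))))
    = beta ℓ m d hb j k
        ((Rv ℓ m l ν i (spec ℓ m 0) *
          ∏ j' ∈ Finset.univ.erase i, ∏ r ∈ Finset.range (-(a j' i)).toNat, ∏ p : Fin (m j'),
            (spec ℓ m 0 - gam ℓ m j' p - cst ℓ m (cf ℓ a d hb i j' r))) /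
        (∏ p : Fin (m i),
          ((spec ℓ m 0 - gam ℓ m i p) *
            (spec ℓ m 0 - gam ℓ m i p - cst ℓ m (Complex.I * hb * (d i : ℂ)))))) *
      (spec ℓ m 0 - gam ℓ m j k - cst ℓ m (Complex.I * hb * (d j : ℂ))
        - cst ℓ m (Complex.I * hb / 2 * ((d i : ℂ) * (a i j : ℂ)))) := by
  have hβR : beta ℓ m d hb j k (Rv ℓ m l ν i (spec ℓ m 0)) = Rv ℓ m l ν i (spec ℓ m 0) := by
    rw [Rv, map_prod]
    exact Finset.prod_congr rfl fun t _ => by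
      rw [map_sub, YCL.beta_spec, YCL.beta_cst]
  by_cases hij : i = j
  · subst hij
    have hκ : cst ℓ m (Complex.I * hb / 2 * ((d i : ℂ) * (a i i : ℂ)))
        = cst ℓ m (Complex.I * hb * (d i : ℂ)) := by
      congr 1; rw [ha i]; push_cast; ring
    have hβN : beta ℓ m d hb i k
        (∏ j' ∈ Finset.univ.erase i, ∏ r ∈ Finset.range (-(a j' i)).toNat, ∏ p : Fin (m j'),
          (spec ℓ m 0 - gam ℓ m j' p - cst ℓ m (cf ℓ a d hb i j' r)))
        = ∏ j' ∈ Finset.univ.erase i, ∏ r ∈ Finset.range (-(a j' i)).toNat, ∏ p : Fin (m j'),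
          (spec ℓ m 0 - gam ℓ m j' p - cst ℓ m (cf ℓ a d hb i j' r)) := by
      rw [map_prod]; refine Finset.prod_congr rfl fun j' hj' => ?_
      rw [map_prod]; refine Finset.prod_congr rfl fun r _ => ?_
      rw [map_prod]; refine Finset.prod_congr rfl fun p _ => ?_
      exact YCL.beta_lin_ne d hb i k (YCL.inr_ne (Finset.mem_erase.mp hj').1) _
    have hβD : beta ℓ m d hb i k
        (∏ p : Fin (m i), ((spec ℓ m 0 - gam ℓ m i p) *
          (spec ℓ m 0 - gam ℓ m i p - cst ℓ m (Complex.I * hb * (d i : ℂ)))))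
        = ((spec ℓ m 0 - gam ℓ m i k - cst ℓ m (Complex.I * hb * (d i : ℂ))) *
            (spec ℓ m 0 - gam ℓ m i k - cst ℓ m (Complex.I * hb * (d i : ℂ))
              - cst ℓ m (Complex.I * hb * (d i : ℂ)))) *
          ∏ p ∈ Finset.univ.erase k, ((spec ℓ m 0 - gam ℓ m i p) *
            (spec ℓ m 0 - gam ℓ m i p - cst ℓ m (Complex.I * hb * (d i : ℂ)))) := by
      rw [map_prod, ← Finset.mul_prod_erase Finset.univ _ (Finset.mem_univ k)]
      congr 1
      · simp only [map_mul, map_sub, YCL.beta_spec, YCL.beta_cst, YCL.beta_gam_self]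
        ring
      · refine Finset.prod_congr rfl fun p hp => ?_
        simp only [map_mul, map_sub, YCL.beta_spec, YCL.beta_cst,
          YCL.beta_gam_ne _ _ _ _ (YCL.inr_ne' (m := m) (Finset.mem_erase.mp hp).1)]
    have hD : (∏ p : Fin (m i), ((spec ℓ m 0 - gam ℓ m i p) *
          (spec ℓ m 0 - gam ℓ m i p - cst ℓ m (Complex.I * hb * (d i : ℂ)))))
        = ((spec ℓ m 0 - gam ℓ m i k) *
            (spec ℓ m 0 - gam ℓ m i k - cst ℓ m (Complex.I * hb * (d i : ℂ)))) *
          ∏ p ∈ Finset.univ.erase k, ((spec ℓ m 0 - gam ℓ m i p) *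
            (spec ℓ m 0 - gam ℓ m i p - cst ℓ m (Complex.I * hb * (d i : ℂ)))) :=
      (Finset.mul_prod_erase Finset.univ _ (Finset.mem_univ k)).symm
    rw [map_div₀, map_mul, hβR, hβN, hβD, hκ, hD]
    have h1 := YCL.spec_gam_ne (m := m) 0 i k
    have h2 := YCL.spec_gam_cst_ne (m := m) 0 i k (Complex.I * hb * (d i : ℂ))
    have h3 := YCL.spec_gam_cst_cst_ne (m := m) 0 i k (Complex.I * hb * (d i : ℂ))
      (Complex.I * hb * (d i : ℂ))
    have hD' : (∏ p ∈ Finset.univ.erase k, ((spec ℓ m 0 - gam ℓ m i p) *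
        (spec ℓ m 0 - gam ℓ m i p - cst ℓ m (Complex.I * hb * (d i : ℂ))))) ≠ 0 :=
      Finset.prod_ne_zero_iff.mpr fun p _ =>
        mul_ne_zero (YCL.spec_gam_ne 0 i p) (YCL.spec_gam_cst_ne 0 i p _)
    field_simp
    ring
  · -- case i ≠ j
    have hji : j ≠ i := Ne.symm hij
    have hjm : j ∈ Finset.univ.erase i := Finset.mem_erase.mpr ⟨hji, Finset.mem_univ j⟩
    have hsplitN : (∏ j' ∈ Finset.univ.erase i, ∏ r ∈ Finset.range (-(a j' i)).toNat,
          ∏ p : Fin (m j'), (spec ℓ m 0 - gam ℓ m j' p - cst ℓ m (cf ℓ a d hb i j' r)))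
        = ((∏ r ∈ Finset.range (-(a j i)).toNat,
              (spec ℓ m 0 - gam ℓ m j k - cst ℓ m (cf ℓ a d hb i j r))) *
            (∏ r ∈ Finset.range (-(a j i)).toNat, ∏ p ∈ Finset.univ.erase k,
              (spec ℓ m 0 - gam ℓ m j p - cst ℓ m (cf ℓ a d hb i j r)))) *
          ∏ j' ∈ (Finset.univ.erase i).erase j, ∏ r ∈ Finset.range (-(a j' i)).toNat,
            ∏ p : Fin (m j'), (spec ℓ m 0 - gam ℓ m j' p - cst ℓ m (cf ℓ a d hb i j' r)) := by
      rw [← Finset.mul_prod_erase _ _ hjm]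
      congr 1
      rw [← Finset.prod_mul_distrib]
      exact Finset.prod_congr rfl fun r _ =>
        (Finset.mul_prod_erase Finset.univ _ (Finset.mem_univ k)).symm
    have hsplitβ : beta ℓ m d hb j k
        (∏ j' ∈ Finset.univ.erase i, ∏ r ∈ Finset.range (-(a j' i)).toNat,
          ∏ p : Fin (m j'), (spec ℓ m 0 - gam ℓ m j' p - cst ℓ m (cf ℓ a d hb i j' r)))
        = ((∏ r ∈ Finset.range (-(a j i)).toNat,
              (spec ℓ m 0 - gam ℓ m j k - cst ℓ m (Complex.I * hb * (d j : ℂ))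
                - cst ℓ m (cf ℓ a d hb i j r))) *
            (∏ r ∈ Finset.range (-(a j i)).toNat, ∏ p ∈ Finset.univ.erase k,
              (spec ℓ m 0 - gam ℓ m j p - cst ℓ m (cf ℓ a d hb i j r)))) *
          ∏ j' ∈ (Finset.univ.erase i).erase j, ∏ r ∈ Finset.range (-(a j' i)).toNat,
            ∏ p : Fin (m j'), (spec ℓ m 0 - gam ℓ m j' p - cst ℓ m (cf ℓ a d hb i j' r)) := by
      rw [map_prod, ← Finset.mul_prod_erase _ _ hjm]
      congr 1
      · have e1 : ∀ r ∈ Finset.range (-(a j i)).toNat,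
            beta ℓ m d hb j k (∏ p : Fin (m j),
              (spec ℓ m 0 - gam ℓ m j p - cst ℓ m (cf ℓ a d hb i j r)))
            = (spec ℓ m 0 - gam ℓ m j k - cst ℓ m (Complex.I * hb * (d j : ℂ))
                - cst ℓ m (cf ℓ a d hb i j r)) *
              ∏ p ∈ Finset.univ.erase k,
                (spec ℓ m 0 - gam ℓ m j p - cst ℓ m (cf ℓ a d hb i j r)) := by
          intro r _
          rw [map_prod, ← Finset.mul_prod_erase Finset.univ _ (Finset.mem_univ k)]
          congr 1
          · simp only [map_sub, YCL.beta_spec, YCL.beta_cst, YCL.beta_gam_self]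
            ring
          · exact Finset.prod_congr rfl fun p hp =>
              YCL.beta_lin_ne d hb j k (YCL.inr_ne' (Finset.mem_erase.mp hp).1) _
        rw [map_prod, Finset.prod_congr rfl e1, Finset.prod_mul_distrib]
      · refine Finset.prod_congr rfl fun j' hj' => ?_
        rw [map_prod]; refine Finset.prod_congr rfl fun r _ => ?_
        rw [map_prod]; refine Finset.prod_congr rfl fun p _ => ?_
        exact YCL.beta_lin_ne d hb j k (YCL.inr_ne (Finset.mem_erase.mp hj').1) _
    have hβD : beta ℓ m d hb j k
        (∏ p : Fin (m i), ((spec ℓ m 0 - gam ℓ m i p) *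
          (spec ℓ m 0 - gam ℓ m i p - cst ℓ m (Complex.I * hb * (d i : ℂ)))))
        = ∏ p : Fin (m i), ((spec ℓ m 0 - gam ℓ m i p) *
          (spec ℓ m 0 - gam ℓ m i p - cst ℓ m (Complex.I * hb * (d i : ℂ)))) := by
      rw [map_prod]; refine Finset.prod_congr rfl fun p _ => ?_
      simp only [map_mul, map_sub, YCL.beta_spec, YCL.beta_cst,
        YCL.beta_gam_ne _ _ _ _ (YCL.inr_ne (m := m) hij)]
    have hn : (((-(a j i)).toNat : ℕ) : ℂ) = -((a j i : ℤ) : ℂ) := by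
      have h0 : (((-(a j i)).toNat : ℕ) : ℤ) = -(a j i) :=
        Int.toNat_of_nonneg (neg_nonneg.mpr (ha' j i hji))
      exact_mod_cast congrArg (Int.cast : ℤ → ℂ) h0
    have hs : (d i : ℂ) * ((a i j : ℤ) : ℂ) = (d j : ℂ) * ((a j i : ℤ) : ℂ) := by
      exact_mod_cast congrArg (Int.cast : ℤ → ℂ) (hsym i j)
    have hQ : (∏ r ∈ Finset.range (-(a j i)).toNat,
          (spec ℓ m 0 - gam ℓ m j k - cst ℓ m (cf ℓ a d hb i j r))) *
        (spec ℓ m 0 - gam ℓ m j k - cst ℓ m (Complex.I * hb * (d j : ℂ))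
          + cst ℓ m (Complex.I * hb / 2 * ((d i : ℂ) * (a i j : ℂ))))
        = (∏ r ∈ Finset.range (-(a j i)).toNat,
            (spec ℓ m 0 - gam ℓ m j k - cst ℓ m (Complex.I * hb * (d j : ℂ))
              - cst ℓ m (cf ℓ a d hb i j r))) *
          (spec ℓ m 0 - gam ℓ m j k - cst ℓ m (Complex.I * hb * (d j : ℂ))
            - cst ℓ m (Complex.I * hb / 2 * ((d i : ℂ) * (a i j : ℂ)))) := by
      have hc1 : ∀ r : ℕ, spec ℓ m 0 - gam ℓ m j k - cst ℓ m (Complex.I * hb * (d j : ℂ))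
            - cst ℓ m (cf ℓ a d hb i j r)
          = spec ℓ m 0 - gam ℓ m j k - cst ℓ m (cf ℓ a d hb i j (r+1)) := by
        intro r
        rw [show cf ℓ a d hb i j (r+1) = Complex.I * hb * (d j : ℂ) + cf ℓ a d hb i j r from by
          simp only [cf]; push_cast; ring, YCL.cst_add]
        ring
      have hcend : cf ℓ a d hb i j ((-(a j i)).toNat)
          = Complex.I * hb * (d j : ℂ)
            - Complex.I * hb / 2 * ((d i : ℂ) * (a i j : ℂ)) := by
        simp only [cf]; rw [hn]; linear_combination Complex.I * hb * hs
      have hc0 : cf ℓ a d hb i j 0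
          = Complex.I * hb * (d j : ℂ)
            + Complex.I * hb / 2 * ((d i : ℂ) * (a i j : ℂ)) := by
        simp only [cf]; push_cast; ring
      rw [show spec ℓ m 0 - gam ℓ m j k - cst ℓ m (Complex.I * hb * (d j : ℂ))
            + cst ℓ m (Complex.I * hb / 2 * ((d i : ℂ) * (a i j : ℂ)))
          = spec ℓ m 0 - gam ℓ m j k - cst ℓ m (cf ℓ a d hb i j ((-(a j i)).toNat)) from by
        rw [hcend, YCL.cst_sub]; ring]
      rw [show spec ℓ m 0 - gam ℓ m j k - cst ℓ m (Complex.I * hb * (d j : ℂ))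
            - cst ℓ m (Complex.I * hb / 2 * ((d i : ℂ) * (a i j : ℂ)))
          = spec ℓ m 0 - gam ℓ m j k - cst ℓ m (cf ℓ a d hb i j 0) from by
        rw [hc0, YCL.cst_add]; ring]
      rw [Finset.prod_congr rfl fun r _ => hc1 r]
      exact (Finset.prod_range_succ _ _).symm.trans (Finset.prod_range_succ' _ _)
    rw [map_div₀, map_mul, hβR, hsplitβ, hβD, hsplitN]
    linear_combination ((Rv ℓ m l ν i (spec ℓ m 0) *
        ((∏ r ∈ Finset.range (-(a j i)).toNat, ∏ p ∈ Finset.univ.erase k,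
          (spec ℓ m 0 - gam ℓ m j p - cst ℓ m (cf ℓ a d hb i j r))) *
         ∏ j' ∈ (Finset.univ.erase i).erase j, ∏ r ∈ Finset.range (-(a j' i)).toNat,
           ∏ p : Fin (m j'), (spec ℓ m 0 - gam ℓ m j' p - cst ℓ m (cf ℓ a d hb i j' r)))) /
        (∏ p : Fin (m i), ((spec ℓ m 0 - gam ℓ m i p) *
          (spec ℓ m 0 - gam ℓ m i p - cst ℓ m (Complex.I * hb * (d i : ℂ)))))) * hQ

/-- the Yangian Cartan–lowering relation. -/
theorem yangian_cartan_lowering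
    (ℓ : ℕ) (hl : 1 ≤ ℓ)
    (a : Fin ℓ → Fin ℓ → ℤ) (ha : ∀ i, a i i = 2) (ha' : ∀ i j, i ≠ j → a i j ≤ 0)
    (d : Fin ℓ → ℕ) (hd : ∀ i, 0 < d i)
    (hsym : ∀ i j, (d i : ℤ) * a i j = (d j : ℤ) * a j i)
    (hb : ℂ) (m : Fin ℓ → ℕ) (hm : ∀ i, 0 < m i)
    (l : Fin ℓ → ℕ) (hln : ∀ i, (l i : ℤ) = ∑ j, (m j : ℤ) * a j i)
    (ν : (i : Fin ℓ) → Fin (l i) → ℂ)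
    (i j : Fin ℓ) :
    (spec ℓ m 0 - spec ℓ m 1) •
        (Hop ℓ m a d hb l ν i (spec ℓ m 0) ∘ Fop ℓ m a d hb l ν j (spec ℓ m 1)
          - Fop ℓ m a d hb l ν j (spec ℓ m 1) ∘ Hop ℓ m a d hb l ν i (spec ℓ m 0))
      = cst ℓ m ((I * hb / 2) * ((d i : ℂ) * (a i j : ℂ))) •
        (Hop ℓ m a d hb l ν i (spec ℓ m 0) ∘
            (Fop ℓ m a d hb l ν j (spec ℓ m 0) - Fop ℓ m a d hb l ν j (spec ℓ m 1))
          + (Fop ℓ m a d hb l ν j (spec ℓ m 0) - Fop ℓ m a d hb l ν j (spec ℓ m 1)) ∘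
            Hop ℓ m a d hb l ν i (spec ℓ m 0)) := by
  funext f
  simp only [Pi.smul_apply, Pi.sub_apply, Pi.add_apply, Function.comp_apply, smul_eq_mul,
    Hop, Fop, map_mul]
  simp only [Finset.mul_sum, ← Finset.sum_sub_distrib, ← Finset.sum_add_distrib, Finset.mul_sum]
  refine Finset.sum_congr rfl fun k _ => ?_
  refine YCL.keyfield (spec ℓ m 0) (spec ℓ m 1) (gam ℓ m j k) _ _ _ _ _ _ _ _ ?_ ?_ ?_ ?_
  · exact YCL.spec_gam_cst_ne 0 j k _
  · exact YCL.spec_gam_cst_ne 1 j k _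
  · exact Finset.prod_ne_zero_iff.mpr fun p hp =>
      YCL.gam_gam_ne j k p (Ne.symm (Finset.mem_erase.mp hp).1)
  · exact YCL.key ℓ a ha ha' d hsym hb m l ν i j k
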